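/- The algebra B is spanned as a module over the central polynomial subalgebra generated by s, t, u, v by the monomials E^m F^n G^l with m, n, l ∈ ℕ such that at least one of m, n, l is zero; that is, every element of B is a linear combination, with coefficients that are polynomials in s, t, u, v, of such monomials. -/

import Mathlib

open FreeAlgebra

/-- The defining relations of the invariant algebra `B` of the four-punctured
sphere: generators `0 = E`, `1 = F`, `2 = G`, `3 = s`, `4 = t`, `5 = u`, `6 = v`;
`s, t, u, v` are central. -/
inductive BRel (k : Type) [Field k] (q : k) :
    FreeAlgebra k (Fin 7) → FreeAlgebra k (Fin 7) → Prop where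
  | relFE : BRel k q (ι k 1 * ι k 0)
      (q ^ 2 • (ι k 0 * ι k 1) + (q ^ 2 - q⁻¹ ^ 2) • ι k 2
        + (1 - q ^ 2) • (ι k 3 * ι k 6 + ι k 4 * ι k 5))
  | relGE : BRel k q (ι k 2 * ι k 0)
      (q⁻¹ ^ 2 • (ι k 0 * ι k 2) - (q⁻¹ ^ 2 * (q ^ 2 - q⁻¹ ^ 2)) • ι k 1
        + (1 - q⁻¹ ^ 2) • (ι k 3 * ι k 5 + ι k 4 * ι k 6))
  | relGF : BRel k q (ι k 2 * ι k 1)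
      (q ^ 2 • (ι k 1 * ι k 2) + (q ^ 2 - q⁻¹ ^ 2) • ι k 0
        + (1 - q ^ 2) • (ι k 3 * ι k 4 + ι k 5 * ι k 6))
  | relEFG : BRel k q (ι k 0 * ι k 1 * ι k 2)
      (-(ι k 0 * ι k 0) - q⁻¹ ^ 4 • (ι k 1 * ι k 1) - ι k 2 * ι k 2
        - q⁻¹ ^ 4 • (ι k 3 * ι k 3 + ι k 4 * ι k 4 + ι k 5 * ι k 5 + ι k 6 * ι k 6)
        + (ι k 3 * ι k 4 + ι k 5 * ι k 6) * ι k 0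
        + q⁻¹ ^ 2 • ((ι k 3 * ι k 5 + ι k 4 * ι k 6) * ι k 1)
        + (ι k 3 * ι k 6 + ι k 4 * ι k 5) * ι k 2
        - ι k 3 * ι k 4 * ι k 5 * ι k 6
        + algebraMap k (FreeAlgebra k (Fin 7)) (q⁻¹ ^ 6 * (q ^ 2 + 1) ^ 2))
  | central : ∀ i j : Fin 7, 3 ≤ j → BRel k q (ι k j * ι k i) (ι k i * ι k j)

namespace B18

variable (k : Type) [Field k] (q : k)

noncomputable def e (i : Fin 7) : RingQuot (BRel k q) :=
  RingQuot.mkAlgHom k (BRel k q) (ι k i)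

lemma central_commute (j : Fin 7) (hj : 3 ≤ j) (x : RingQuot (BRel k q)) :
    Commute (e k q j) x := by
  obtain ⟨y, rfl⟩ := RingQuot.mkAlgHom_surjective k (BRel k q) x
  induction y with
  | grade0 r =>
      rw [AlgHom.commutes]
      exact (Algebra.commutes r _).symm
  | grade1 i =>
      have h := RingQuot.mkAlgHom_rel k (BRel.central (q := q) i j hj)
      simp only [map_mul] at h
      exact h
  | mul a b ha hb => rw [map_mul]; exact ha.mul_right hb
  | add a b ha hb => rw [map_add]; exact ha.add_right hb

lemma rFE : e k q 1 * e k q 0 =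
    q ^ 2 • (e k q 0 * e k q 1) + (q ^ 2 - q⁻¹ ^ 2) • e k q 2
      + (1 - q ^ 2) • (e k q 3 * e k q 6 + e k q 4 * e k q 5) := by
  have h := RingQuot.mkAlgHom_rel k (BRel.relFE (k := k) (q := q))
  simpa only [map_mul, map_add, map_smul, e] using h

lemma rGE : e k q 2 * e k q 0 =
    q⁻¹ ^ 2 • (e k q 0 * e k q 2) - (q⁻¹ ^ 2 * (q ^ 2 - q⁻¹ ^ 2)) • e k q 1
      + (1 - q⁻¹ ^ 2) • (e k q 3 * e k q 5 + e k q 4 * e k q 6) := by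
  have h := RingQuot.mkAlgHom_rel k (BRel.relGE (k := k) (q := q))
  simpa only [map_mul, map_add, map_sub, map_smul, e] using h

lemma rGF : e k q 2 * e k q 1 =
    q ^ 2 • (e k q 1 * e k q 2) + (q ^ 2 - q⁻¹ ^ 2) • e k q 0
      + (1 - q ^ 2) • (e k q 3 * e k q 4 + e k q 5 * e k q 6) := by
  have h := RingQuot.mkAlgHom_rel k (BRel.relGF (k := k) (q := q))
  simpa only [map_mul, map_add, map_smul, e] using h

lemma rEFG : e k q 0 * e k q 1 * e k q 2 =
    -(e k q 0 * e k q 0) - q⁻¹ ^ 4 • (e k q 1 * e k q 1) - e k q 2 * e k q 2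
      - q⁻¹ ^ 4 • (e k q 3 * e k q 3 + e k q 4 * e k q 4 + e k q 5 * e k q 5 + e k q 6 * e k q 6)
      + (e k q 3 * e k q 4 + e k q 5 * e k q 6) * e k q 0
      + q⁻¹ ^ 2 • ((e k q 3 * e k q 5 + e k q 4 * e k q 6) * e k q 1)
      + (e k q 3 * e k q 6 + e k q 4 * e k q 5) * e k q 2
      - e k q 3 * e k q 4 * e k q 5 * e k q 6
      + algebraMap k (RingQuot (BRel k q)) (q⁻¹ ^ 6 * (q ^ 2 + 1) ^ 2) := by
  have h := RingQuot.mkAlgHom_rel k (BRel.relEFG (k := k) (q := q))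
  simpa only [map_mul, map_add, map_sub, map_neg, map_smul, AlgHom.commutes, e] using h


noncomputable def Z (a b c d : ℕ) : RingQuot (BRel k q) :=
  e k q 3 ^ a * (e k q 4 ^ b * (e k q 5 ^ c * e k q 6 ^ d))

noncomputable def w (m n l : ℕ) : RingQuot (BRel k q) :=
  e k q 0 ^ m * (e k q 1 ^ n * e k q 2 ^ l)

noncomputable def cw (a b c d m n l : ℕ) : RingQuot (BRel k q) :=
  Z k q a b c d * w k q m n l

def T (d : ℕ) : Submodule k (RingQuot (BRel k q)) :=
  Submodule.span k {x | ∃ a b c d' m n l, m + n + l ≤ d ∧ x = cw k q a b c d' m n l}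

def M : Submodule k (RingQuot (BRel k q)) :=
  Submodule.span k {x | ∃ a b c d' m n l, (m = 0 ∨ n = 0 ∨ l = 0) ∧ x = cw k q a b c d' m n l}

lemma Z_commute (a b c d : ℕ) (x : RingQuot (BRel k q)) : Commute (Z k q a b c d) x :=
  (((central_commute k q 3 (by decide) x).pow_left a).mul_left
    (((central_commute k q 4 (by decide) x).pow_left b).mul_left
      (((central_commute k q 5 (by decide) x).pow_left c).mul_left
        ((central_commute k q 6 (by decide) x).pow_left d))))

lemma T_mono {d e : ℕ} (h : d ≤ e) : T k q d ≤ T k q e :=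
  Submodule.span_mono (fun x ⟨a, b, c, d', m, n, l, hm, hx⟩ =>
    ⟨a, b, c, d', m, n, l, hm.trans h, hx⟩)

lemma cw_mem {d m n l : ℕ} (a b c d' : ℕ) (h : m + n + l ≤ d) :
    cw k q a b c d' m n l ∈ T k q d :=
  Submodule.subset_span ⟨a, b, c, d', m, n, l, h, rfl⟩

lemma w_eq_cw (m n l : ℕ) : w k q m n l = cw k q 0 0 0 0 m n l := by
  simp [cw, Z]

lemma w_mem {d m n l : ℕ} (h : m + n + l ≤ d) : w k q m n l ∈ T k q d := by
  rw [w_eq_cw]; exact cw_mem k q 0 0 0 0 h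

lemma w_succE (m n l : ℕ) : w k q (m + 1) n l = e k q 0 * w k q m n l := by
  rw [w, w, pow_succ', mul_assoc]

lemma w_succF (n l : ℕ) : w k q 0 (n + 1) l = e k q 1 * w k q 0 n l := by
  simp only [w, pow_zero, one_mul, pow_succ', mul_assoc]

lemma w_succG (l : ℕ) : w k q 0 0 (l + 1) = e k q 2 * w k q 0 0 l := by
  simp only [w, pow_zero, one_mul, pow_succ']

lemma w_succG_r (m n l : ℕ) : w k q m n (l + 1) = w k q m n l * e k q 2 := by
  simp only [w, pow_succ, mul_assoc]

lemma w_succF_r (m n : ℕ) : w k q m (n + 1) 0 = w k q m n 0 * e k q 1 := by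
  simp only [w, pow_zero, mul_one, pow_succ, mul_assoc]

lemma w_succE_r (m : ℕ) : w k q (m + 1) 0 0 = w k q m 0 0 * e k q 0 := by
  simp only [w, pow_zero, mul_one, pow_succ]


lemma e3_cw (a b c d m n l : ℕ) :
    e k q 3 * cw k q a b c d m n l = cw k q (a + 1) b c d m n l := by
  simp only [cw, Z, pow_succ', mul_assoc]

lemma e4_cw (a b c d m n l : ℕ) :
    e k q 4 * cw k q a b c d m n l = cw k q a (b + 1) c d m n l := by
  simp only [cw, Z, pow_succ', mul_assoc]
  rw [((central_commute k q 4 (by decide) (e k q 3)).pow_right a).left_comm]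

lemma e5_cw (a b c d m n l : ℕ) :
    e k q 5 * cw k q a b c d m n l = cw k q a b (c + 1) d m n l := by
  simp only [cw, Z, pow_succ', mul_assoc]
  rw [((central_commute k q 5 (by decide) (e k q 3)).pow_right a).left_comm,
    ((central_commute k q 5 (by decide) (e k q 4)).pow_right b).left_comm]

lemma e6_cw (a b c d m n l : ℕ) :
    e k q 6 * cw k q a b c d m n l = cw k q a b c (d + 1) m n l := by
  simp only [cw, Z, pow_succ', mul_assoc]
  rw [((central_commute k q 6 (by decide) (e k q 3)).pow_right a).left_comm,
    ((central_commute k q 6 (by decide) (e k q 4)).pow_right b).left_comm,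
    ((central_commute k q 6 (by decide) (e k q 5)).pow_right c).left_comm]

lemma ecen_mem {j : Fin 7} (hj : 3 ≤ j) {d : ℕ} {x : RingQuot (BRel k q)} (hx : x ∈ T k q d) :
    e k q j * x ∈ T k q d := by
  induction hx using Submodule.span_induction with
  | mem y hy =>
      obtain ⟨a, b, c, d', m, n, l, hm, rfl⟩ := hy
      fin_cases j
      · exact absurd hj (by decide)
      · exact absurd hj (by decide)
      · exact absurd hj (by decide)
      · show e k q 3 * cw k q a b c d' m n l ∈ T k q d
        rw [e3_cw]; exact cw_mem k q _ _ _ _ hm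
      · show e k q 4 * cw k q a b c d' m n l ∈ T k q d
        rw [e4_cw]; exact cw_mem k q _ _ _ _ hm
      · show e k q 5 * cw k q a b c d' m n l ∈ T k q d
        rw [e5_cw]; exact cw_mem k q _ _ _ _ hm
      · show e k q 6 * cw k q a b c d' m n l ∈ T k q d
        rw [e6_cw]; exact cw_mem k q _ _ _ _ hm
  | zero => rw [mul_zero]; exact Submodule.zero_mem _
  | add x y _ _ hx hy => rw [mul_add]; exact Submodule.add_mem _ hx hy
  | smul r x _ hx => rw [mul_smul_comm]; exact Submodule.smul_mem _ r hx

lemma ecenpow_mem {j : Fin 7} (hj : 3 ≤ j) {d : ℕ} {x : RingQuot (BRel k q)}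
    (hx : x ∈ T k q d) (a : ℕ) : e k q j ^ a * x ∈ T k q d := by
  induction a with
  | zero => simpa using hx
  | succ a ih => rw [pow_succ', mul_assoc]; exact ecen_mem k q hj ih

lemma mulZ_mem {d : ℕ} {x : RingQuot (BRel k q)} (hx : x ∈ T k q d) (a b c d' : ℕ) :
    Z k q a b c d' * x ∈ T k q d := by
  simp only [Z, mul_assoc]
  exact ecenpow_mem k q (j := 3) (by decide) (ecenpow_mem k q (j := 4) (by decide)
    (ecenpow_mem k q (j := 5) (by decide)
      (ecenpow_mem k q (j := 6) (by decide) hx d') c) b) a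

lemma leftmul_span {c : RingQuot (BRel k q)} {d e' : ℕ}
    (h : ∀ m n l, m + n + l ≤ d → c * w k q m n l ∈ T k q e') :
    ∀ x ∈ T k q d, c * x ∈ T k q e' := by
  intro x hx
  induction hx using Submodule.span_induction with
  | mem y hy =>
      obtain ⟨a, b, c', d', m, n, l, hm, rfl⟩ := hy
      rw [cw, ((Z_commute k q a b c' d' c).symm).left_comm]
      exact mulZ_mem k q (h m n l hm) a b c' d'
  | zero => rw [mul_zero]; exact Submodule.zero_mem _
  | add x y _ _ hx hy => rw [mul_add]; exact Submodule.add_mem _ hx hy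
  | smul r x _ hx => rw [mul_smul_comm]; exact Submodule.smul_mem _ r hx

lemma rightmul_span {c : RingQuot (BRel k q)} {d e' : ℕ}
    (h : ∀ m n l, m + n + l ≤ d → w k q m n l * c ∈ T k q e') :
    ∀ x ∈ T k q d, x * c ∈ T k q e' := by
  intro x hx
  induction hx using Submodule.span_induction with
  | mem y hy =>
      obtain ⟨a, b, c', d', m, n, l, hm, rfl⟩ := hy
      rw [cw, mul_assoc]
      exact mulZ_mem k q (h m n l hm) a b c' d'
  | zero => rw [zero_mul]; exact Submodule.zero_mem _
  | add x y _ _ hx hy => rw [add_mul]; exact Submodule.add_mem _ hx hy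
  | smul r x _ hx => rw [smul_mul_assoc]; exact Submodule.smul_mem _ r hx

lemma leftE_span {d : ℕ} : ∀ x ∈ T k q d, e k q 0 * x ∈ T k q (d + 1) :=
  leftmul_span k q (fun m n l hm => by
    rw [← w_succE]; exact w_mem k q (by omega))

lemma rightG_span {d : ℕ} : ∀ x ∈ T k q d, x * e k q 2 ∈ T k q (d + 1) :=
  rightmul_span k q (fun m n l hm => by
    rw [← w_succG_r]; exact w_mem k q (by omega))


lemma stepFE (x : RingQuot (BRel k q)) : e k q 1 * (e k q 0 * x) =
    q ^ 2 • (e k q 0 * (e k q 1 * x)) + (q ^ 2 - q⁻¹ ^ 2) • (e k q 2 * x)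
      + (1 - q ^ 2) • (e k q 3 * (e k q 6 * x) + e k q 4 * (e k q 5 * x)) := by
  rw [← mul_assoc, rFE]
  simp only [add_mul, smul_mul_assoc, mul_assoc]

lemma stepGE (x : RingQuot (BRel k q)) : e k q 2 * (e k q 0 * x) =
    q⁻¹ ^ 2 • (e k q 0 * (e k q 2 * x)) - (q⁻¹ ^ 2 * (q ^ 2 - q⁻¹ ^ 2)) • (e k q 1 * x)
      + (1 - q⁻¹ ^ 2) • (e k q 3 * (e k q 5 * x) + e k q 4 * (e k q 6 * x)) := by
  rw [← mul_assoc, rGE]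
  simp only [add_mul, sub_mul, smul_mul_assoc, mul_assoc]

lemma stepGF (x : RingQuot (BRel k q)) : e k q 2 * (e k q 1 * x) =
    q ^ 2 • (e k q 1 * (e k q 2 * x)) + (q ^ 2 - q⁻¹ ^ 2) • (e k q 0 * x)
      + (1 - q ^ 2) • (e k q 3 * (e k q 4 * x) + e k q 5 * (e k q 6 * x)) := by
  rw [← mul_assoc, rGF]
  simp only [add_mul, smul_mul_assoc, mul_assoc]

lemma swapFG (hq : q ≠ 0) (x : RingQuot (BRel k q)) : e k q 1 * (e k q 2 * x) =
    q⁻¹ ^ 2 • (e k q 2 * (e k q 1 * x)) - (q⁻¹ ^ 2 * (q ^ 2 - q⁻¹ ^ 2)) • (e k q 0 * x)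
      - (q⁻¹ ^ 2 * (1 - q ^ 2)) • (e k q 3 * (e k q 4 * x) + e k q 5 * (e k q 6 * x)) := by
  rw [stepGF]
  match_scalars <;> field_simp <;> ring


lemma cen2_swap (i j : Fin 7) (hi : 3 ≤ i) (hj : 3 ≤ j) (x : RingQuot (BRel k q)) :
    x * (e k q i * e k q j) = e k q i * (e k q j * x) := by
  rw [← ((central_commute k q i hi x).mul_left (central_commute k q j hj x)).eq, mul_assoc]

lemma main_ind (d : ℕ) :
    (∀ m n l, m + n + l ≤ d → e k q 1 * w k q m n l ∈ T k q (d + 1)) ∧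
    (∀ m n l, m + n + l ≤ d → e k q 2 * w k q m n l ∈ T k q (d + 1)) ∧
    (∀ m n l, m + n + l ≤ d → w k q m n l * e k q 1 ∈ T k q (d + 1)) ∧
    (∀ m n l, m + n + l ≤ d → w k q m n l * e k q 0 ∈ T k q (d + 1)) := by
  induction d with
  | zero =>
      refine ⟨?_, ?_, ?_, ?_⟩ <;> intro m n l hml <;>
        obtain ⟨rfl, rfl, rfl⟩ : m = 0 ∧ n = 0 ∧ l = 0 := by omega
      · rw [← w_succF]; exact w_mem k q (by omega)
      · rw [← w_succG]; exact w_mem k q (by omega)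
      · rw [← w_succF_r]; exact w_mem k q (by omega)
      · rw [← w_succE_r]; exact w_mem k q (by omega)
  | succ d ih =>
      obtain ⟨ihLF, ihLG, ihRF, ihRE⟩ := ih
      have LF : ∀ m n l, m + n + l ≤ d + 1 → e k q 1 * w k q m n l ∈ T k q (d + 2) := by
        intro m n l hml
        match m with
        | 0 => rw [← w_succF]; exact w_mem k q (by omega)
        | m' + 1 =>
          rw [w_succE, stepFE]
          have hw : w k q m' n l ∈ T k q (d + 2) := w_mem k q (by omega)
          refine Submodule.add_mem _ (Submodule.add_mem _ ?_ ?_) ?_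
          · exact Submodule.smul_mem _ _ (leftE_span k q _ (ihLF m' n l (by omega)))
          · exact Submodule.smul_mem _ _ (T_mono k q (by omega) (ihLG m' n l (by omega)))
          · exact Submodule.smul_mem _ _ (Submodule.add_mem _
              (ecen_mem k q (by decide) (ecen_mem k q (by decide) hw))
              (ecen_mem k q (by decide) (ecen_mem k q (by decide) hw)))
      have LFs : ∀ x ∈ T k q (d + 1), e k q 1 * x ∈ T k q (d + 2) := leftmul_span k q LF
      have LG : ∀ m n l, m + n + l ≤ d + 1 → e k q 2 * w k q m n l ∈ T k q (d + 2) := by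
        intro m n l hml
        match m, n with
        | m' + 1, n =>
          rw [w_succE, stepGE]
          have hw : w k q m' n l ∈ T k q (d + 2) := w_mem k q (by omega)
          refine Submodule.add_mem _ (Submodule.sub_mem _ ?_ ?_) ?_
          · exact Submodule.smul_mem _ _ (leftE_span k q _ (ihLG m' n l (by omega)))
          · exact Submodule.smul_mem _ _ (T_mono k q (by omega) (ihLF m' n l (by omega)))
          · exact Submodule.smul_mem _ _ (Submodule.add_mem _
              (ecen_mem k q (by decide) (ecen_mem k q (by decide) hw))
              (ecen_mem k q (by decide) (ecen_mem k q (by decide) hw)))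
        | 0, 0 => rw [← w_succG]; exact w_mem k q (by omega)
        | 0, n' + 1 =>
          rw [w_succF, stepGF]
          have hw : w k q 0 n' l ∈ T k q (d + 2) := w_mem k q (by omega)
          refine Submodule.add_mem _ (Submodule.add_mem _ ?_ ?_) ?_
          · exact Submodule.smul_mem _ _ (LFs _ (ihLG 0 n' l (by omega)))
          · rw [← w_succE]
            exact Submodule.smul_mem _ _ (w_mem k q (by omega))
          · exact Submodule.smul_mem _ _ (Submodule.add_mem _
              (ecen_mem k q (by decide) (ecen_mem k q (by decide) hw))
              (ecen_mem k q (by decide) (ecen_mem k q (by decide) hw)))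
      have RF : ∀ m n l, m + n + l ≤ d + 1 → w k q m n l * e k q 1 ∈ T k q (d + 2) := by
        intro m n l hml
        match l with
        | 0 => rw [← w_succF_r]; exact w_mem k q (by omega)
        | l' + 1 =>
          rw [w_succG_r, mul_assoc, rGF]
          have hw : w k q m n l' ∈ T k q (d + 2) := w_mem k q (by omega)
          simp only [mul_add, mul_smul_comm, cen2_swap k q 3 4 (by decide) (by decide),
            cen2_swap k q 5 6 (by decide) (by decide)]
          refine Submodule.add_mem _ (Submodule.add_mem _ ?_ ?_) ?_
          · rw [← mul_assoc]
            exact Submodule.smul_mem _ _ (rightG_span k q _ (ihRF m n l' (by omega)))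
          · exact Submodule.smul_mem _ _ (T_mono k q (by omega) (ihRE m n l' (by omega)))
          · exact Submodule.smul_mem _ _ (Submodule.add_mem _
              (ecen_mem k q (by decide) (ecen_mem k q (by decide) hw))
              (ecen_mem k q (by decide) (ecen_mem k q (by decide) hw)))
      have RFs : ∀ x ∈ T k q (d + 1), x * e k q 1 ∈ T k q (d + 2) := rightmul_span k q RF
      have RE : ∀ m n l, m + n + l ≤ d + 1 → w k q m n l * e k q 0 ∈ T k q (d + 2) := by
        intro m n l hml
        match n, l with
        | n, l' + 1 =>
          rw [w_succG_r, mul_assoc, rGE]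
          have hw : w k q m n l' ∈ T k q (d + 2) := w_mem k q (by omega)
          simp only [mul_add, mul_sub, mul_smul_comm, cen2_swap k q 3 5 (by decide) (by decide),
            cen2_swap k q 4 6 (by decide) (by decide)]
          refine Submodule.add_mem _ (Submodule.sub_mem _ ?_ ?_) ?_
          · rw [← mul_assoc]
            exact Submodule.smul_mem _ _ (rightG_span k q _ (ihRE m n l' (by omega)))
          · exact Submodule.smul_mem _ _ (T_mono k q (by omega) (ihRF m n l' (by omega)))
          · exact Submodule.smul_mem _ _ (Submodule.add_mem _
              (ecen_mem k q (by decide) (ecen_mem k q (by decide) hw))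
              (ecen_mem k q (by decide) (ecen_mem k q (by decide) hw)))
        | 0, 0 => rw [← w_succE_r]; exact w_mem k q (by omega)
        | n' + 1, 0 =>
          rw [w_succF_r, mul_assoc, rFE]
          have hw : w k q m n' 0 ∈ T k q (d + 2) := w_mem k q (by omega)
          simp only [mul_add, mul_smul_comm, cen2_swap k q 3 6 (by decide) (by decide),
            cen2_swap k q 4 5 (by decide) (by decide)]
          refine Submodule.add_mem _ (Submodule.add_mem _ ?_ ?_) ?_
          · rw [← mul_assoc]
            exact Submodule.smul_mem _ _ (RFs _ (ihRE m n' 0 (by omega)))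
          · rw [← w_succG_r]
            exact Submodule.smul_mem _ _ (w_mem k q (by omega))
          · exact Submodule.smul_mem _ _ (Submodule.add_mem _
              (ecen_mem k q (by decide) (ecen_mem k q (by decide) hw))
              (ecen_mem k q (by decide) (ecen_mem k q (by decide) hw)))
      exact ⟨LF, LG, RF, RE⟩


lemma LF_span (d : ℕ) : ∀ x ∈ T k q d, e k q 1 * x ∈ T k q (d + 1) :=
  leftmul_span k q (main_ind k q d).1

lemma LG_span (d : ℕ) : ∀ x ∈ T k q d, e k q 2 * x ∈ T k q (d + 1) :=
  leftmul_span k q (main_ind k q d).2.1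

lemma RF_span (d : ℕ) : ∀ x ∈ T k q d, x * e k q 1 ∈ T k q (d + 1) :=
  rightmul_span k q (main_ind k q d).2.2.1

lemma RE_span (d : ℕ) : ∀ x ∈ T k q d, x * e k q 0 ∈ T k q (d + 1) :=
  rightmul_span k q (main_ind k q d).2.2.2

lemma powE_span (j : ℕ) {d : ℕ} {x : RingQuot (BRel k q)} (hx : x ∈ T k q d) :
    e k q 0 ^ j * x ∈ T k q (d + j) := by
  induction j with
  | zero => simpa using hx
  | succ j ihj => rw [pow_succ', mul_assoc]; exact leftE_span k q _ ihj

lemma powG_span_r (j : ℕ) {d : ℕ} {x : RingQuot (BRel k q)} (hx : x ∈ T k q d) :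
    x * e k q 2 ^ j ∈ T k q (d + j) := by
  induction j with
  | zero => simpa using hx
  | succ j ihj => rw [pow_succ, ← mul_assoc]; exact rightG_span k q _ ihj

lemma Kbase : w k q 1 1 1 ∈ T k q 2 := by
  rw [show w k q 1 1 1 = e k q 0 * e k q 1 * e k q 2 by simp [w, mul_assoc], rEFG]
  have h1 : (1 : RingQuot (BRel k q)) ∈ T k q 2 := by
    rw [show (1 : RingQuot (BRel k q)) = w k q 0 0 0 by simp [w]]
    exact w_mem k q (by omega)
  have h200 : e k q 0 * e k q 0 ∈ T k q 2 := by
    rw [show e k q 0 * e k q 0 = w k q 2 0 0 by simp [w, pow_two]]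
    exact w_mem k q (by omega)
  have h020 : e k q 1 * e k q 1 ∈ T k q 2 := by
    rw [show e k q 1 * e k q 1 = w k q 0 2 0 by simp [w, pow_two]]
    exact w_mem k q (by omega)
  have h002 : e k q 2 * e k q 2 ∈ T k q 2 := by
    rw [show e k q 2 * e k q 2 = w k q 0 0 2 by simp [w, pow_two]]
    exact w_mem k q (by omega)
  have hsq : ∀ i : Fin 7, 3 ≤ i → e k q i * e k q i ∈ T k q 2 := fun i hi => by
    simpa using ecen_mem k q hi (ecen_mem k q hi h1)
  have hpair : ∀ (i j : Fin 7) (x : RingQuot (BRel k q)), 3 ≤ i → 3 ≤ j → x ∈ T k q 2 →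
      e k q i * e k q j * x ∈ T k q 2 := fun i j x hi hj hx => by
    rw [mul_assoc]; exact ecen_mem k q hi (ecen_mem k q hj hx)
  have hE : e k q 0 ∈ T k q 2 := by
    rw [show e k q 0 = w k q 1 0 0 by simp [w]]; exact w_mem k q (by omega)
  have hF : e k q 1 ∈ T k q 2 := by
    rw [show e k q 1 = w k q 0 1 0 by simp [w]]; exact w_mem k q (by omega)
  have hG : e k q 2 ∈ T k q 2 := by
    rw [show e k q 2 = w k q 0 0 1 by simp [w]]; exact w_mem k q (by omega)
  simp only [add_mul]
  refine Submodule.add_mem _ (Submodule.sub_mem _ (Submodule.add_mem _ (Submodule.add_mem _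
    (Submodule.add_mem _ (Submodule.sub_mem _ (Submodule.sub_mem _ (Submodule.sub_mem _
      ?_ ?_) ?_) ?_) ?_) ?_) ?_) ?_) ?_
  · exact Submodule.neg_mem _ h200
  · exact Submodule.smul_mem _ _ h020
  · exact h002
  · exact Submodule.smul_mem _ _ (Submodule.add_mem _ (Submodule.add_mem _
      (Submodule.add_mem _ (hsq 3 (by decide)) (hsq 4 (by decide))) (hsq 5 (by decide)))
      (hsq 6 (by decide)))
  · exact Submodule.add_mem _ (hpair 3 4 _ (by decide) (by decide) hE)
      (hpair 5 6 _ (by decide) (by decide) hE)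
  · exact Submodule.smul_mem _ _ (Submodule.add_mem _
      (hpair 3 5 _ (by decide) (by decide) hF) (hpair 4 6 _ (by decide) (by decide) hF))
  · exact Submodule.add_mem _ (hpair 3 6 _ (by decide) (by decide) hG)
      (hpair 4 5 _ (by decide) (by decide) hG)
  · rw [show e k q 3 * e k q 4 * e k q 5 * e k q 6 =
        e k q 3 * (e k q 4 * (e k q 5 * (e k q 6 * 1))) by simp [mul_assoc]]
    exact ecen_mem k q (by decide) (ecen_mem k q (by decide)
      (ecen_mem k q (by decide) (ecen_mem k q (by decide) h1)))
  · rw [Algebra.algebraMap_eq_smul_one]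
    exact Submodule.smul_mem _ _ h1

lemma K (hq : q ≠ 0) (n : ℕ) : w k q 1 (n + 1) 1 ∈ T k q (n + 2) := by
  induction n with
  | zero => exact Kbase k q
  | succ n ihn =>
      have heq : w k q 1 (n + 1 + 1) 1 =
          w k q 1 (n + 1) 0 * (e k q 1 * (e k q 2 * 1)) := by
        simp only [mul_one, w, pow_one, pow_zero]
        rw [pow_succ (e k q 1) (n + 1)]
        simp only [mul_assoc, mul_one]
      rw [heq, swapFG k q hq]
      have hw : w k q 1 (n + 1) 0 ∈ T k q (n + 2) := w_mem k q (by omega)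
      simp only [mul_one, mul_sub, mul_add, mul_smul_comm,
        cen2_swap k q 3 4 (by decide) (by decide), cen2_swap k q 5 6 (by decide) (by decide)]
      refine Submodule.sub_mem _ (Submodule.sub_mem _ ?_ ?_) ?_
      · rw [← mul_assoc, ← w_succG_r]
        exact Submodule.smul_mem _ _ (RF_span k q (n + 2) _ ihn)
      · exact Submodule.smul_mem _ _ (RE_span k q (n + 2) _ hw)
      · have hw' : w k q 1 (n + 1) 0 ∈ T k q (n + 3) := w_mem k q (by omega)
        exact Submodule.smul_mem _ _ (Submodule.add_mem _
          (ecen_mem k q (by decide) (ecen_mem k q (by decide) hw'))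
          (ecen_mem k q (by decide) (ecen_mem k q (by decide) hw')))

lemma master (hq : q ≠ 0) : ∀ t m n l, m + n + l ≤ t → ∀ a b c d',
    cw k q a b c d' m n l ∈ M k q := by
  intro t
  induction t using Nat.strong_induction_on with
  | _ t ih =>
      intro m n l hml a b c d'
      by_cases h0 : m = 0 ∨ n = 0 ∨ l = 0
      · exact Submodule.subset_span ⟨a, b, c, d', m, n, l, h0, rfl⟩
      push_neg at h0
      obtain ⟨hm, hn, hl⟩ := h0
      obtain ⟨m', rfl⟩ : ∃ m', m = m' + 1 := ⟨m - 1, by omega⟩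
      obtain ⟨n', rfl⟩ : ∃ n', n = n' + 1 := ⟨n - 1, by omega⟩
      obtain ⟨l', rfl⟩ : ∃ l', l = l' + 1 := ⟨l - 1, by omega⟩
      have hT : T k q (n' + 2 + m' + l') ≤ M k q := by
        rw [T, Submodule.span_le]
        rintro x ⟨a2, b2, c2, d2, m2, n2, l2, hm2, rfl⟩
        exact ih (n' + 2 + m' + l') (by omega) m2 n2 l2 hm2 a2 b2 c2 d2
      have hweq : w k q (m' + 1) (n' + 1) (l' + 1) =
          (e k q 0 ^ m' * w k q 1 (n' + 1) 1) * e k q 2 ^ l' := by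
        simp only [w, pow_one]
        rw [pow_succ (e k q 0) m', pow_succ (e k q 2) l']
        simp only [mul_assoc]
        rw [((Commute.refl (e k q 2)).pow_left l').eq]
      have hw : w k q (m' + 1) (n' + 1) (l' + 1) ∈ T k q (n' + 2 + m' + l') := by
        rw [hweq]
        exact powG_span_r k q l' (powE_span k q m' (K k q hq n'))
      exact hT (mulZ_mem k q hw a b c d')

lemma T_le_M (hq : q ≠ 0) (d : ℕ) : T k q d ≤ M k q := by
  rw [T, Submodule.span_le]
  rintro x ⟨a, b, c, d', m, n, l, hm, rfl⟩
  exact master k q hq d m n l hm a b c d'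

lemma gen_mul_M (hq : q ≠ 0) (i : Fin 7) : ∀ x ∈ M k q, e k q i * x ∈ M k q := by
  intro x hx
  induction hx using Submodule.span_induction with
  | mem y hy =>
      obtain ⟨a, b, c, d', m, n, l, _, rfl⟩ := hy
      have hcw : cw k q a b c d' m n l ∈ T k q (m + n + l) := cw_mem k q a b c d' le_rfl
      fin_cases i
      · exact T_le_M k q hq _ (leftE_span k q _ hcw)
      · exact T_le_M k q hq _ (LF_span k q _ _ hcw)
      · exact T_le_M k q hq _ (LG_span k q _ _ hcw)
      · exact T_le_M k q hq _ (ecen_mem k q (j := 3) (by decide) hcw)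
      · exact T_le_M k q hq _ (ecen_mem k q (j := 4) (by decide) hcw)
      · exact T_le_M k q hq _ (ecen_mem k q (j := 5) (by decide) hcw)
      · exact T_le_M k q hq _ (ecen_mem k q (j := 6) (by decide) hcw)
  | zero => rw [mul_zero]; exact Submodule.zero_mem _
  | add x y _ _ hx hy => rw [mul_add]; exact Submodule.add_mem _ hx hy
  | smul r x _ hx => rw [mul_smul_comm]; exact Submodule.smul_mem _ r hx

end B18

/-- `B` is spanned, over the central subalgebra generated by `s, t, u, v`, by the
monomials `E^m F^n G^l` with at least one of `m, n, l` equal to zero: every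
element is a `k`-linear combination of elements
`s^a t^b u^c v^d · E^m F^n G^l` with `m = 0` or `n = 0` or `l = 0`. -/
theorem stmt_18 (k : Type) [Field k] (q : k) (hq : q ≠ 0) (hq4 : q ^ 4 ≠ 1)
    (x : RingQuot (BRel k q)) :
    x ∈ Submodule.span k
      { w : RingQuot (BRel k q) | ∃ a b c d m n l : ℕ,
        (m = 0 ∨ n = 0 ∨ l = 0) ∧
        w = RingQuot.mkAlgHom k (BRel k q) (ι k 3) ^ a *
            RingQuot.mkAlgHom k (BRel k q) (ι k 4) ^ b *
            RingQuot.mkAlgHom k (BRel k q) (ι k 5) ^ c *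
            RingQuot.mkAlgHom k (BRel k q) (ι k 6) ^ d *
            RingQuot.mkAlgHom k (BRel k q) (ι k 0) ^ m *
            RingQuot.mkAlgHom k (BRel k q) (ι k 1) ^ n *
            RingQuot.mkAlgHom k (BRel k q) (ι k 2) ^ l } := by
  have key : ∀ y : FreeAlgebra k (Fin 7), ∀ z ∈ B18.M k q,
      RingQuot.mkAlgHom k (BRel k q) y * z ∈ B18.M k q := by
    intro y
    induction y with
    | grade0 r =>
        intro z hz
        rw [AlgHom.commutes, ← Algebra.smul_def]
        exact Submodule.smul_mem _ r hz
    | grade1 i => exact B18.gen_mul_M k q hq i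
    | mul a b ha hb => intro z hz; rw [map_mul, mul_assoc]; exact ha _ (hb z hz)
    | add a b ha hb =>
        intro z hz
        rw [map_add, add_mul]
        exact Submodule.add_mem _ (ha z hz) (hb z hz)
  obtain ⟨y, rfl⟩ := RingQuot.mkAlgHom_surjective k (BRel k q) x
  have h1 : (1 : RingQuot (BRel k q)) ∈ B18.M k q :=
    Submodule.subset_span ⟨0, 0, 0, 0, 0, 0, 0, Or.inl rfl, by simp [B18.cw, B18.Z, B18.w]⟩
  have hx := key y 1 h1
  rw [mul_one] at hx
  refine Submodule.span_le.2 (fun z hz => ?_) hx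
  obtain ⟨a, b, c, d', m, n, l, hcond, rfl⟩ := hz
  exact Submodule.subset_span
    ⟨a, b, c, d', m, n, l, hcond, by simp [B18.cw, B18.Z, B18.w, B18.e, mul_assoc]⟩
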